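/- Let p(n) count {Empty, Blue, Red}-colorings of Fin n with no two adjacent indices both non-Empty, and let c(n) count such colorings of ZMod n with no two cyclically adjacent indices both non-Empty. Then for all n ≥ 4, c(n) = p(n-1) + 2·p(n-3). -/

import Mathlib

inductive Color : Type
  | Empty | Blue | Red
  deriving DecidableEq

instance : Fintype Color :=
  ⟨{Color.Empty, Color.Blue, Color.Red}, fun x => by cases x <;> simp⟩

/-- Number of Cis positions on the path `P_n`. -/
def cisPath (n : ℕ) : ℕ :=
  Fintype.card {c : Fin n → Color //
    ∀ i j : Fin n, (j : ℕ) = (i : ℕ) + 1 →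
      ¬(c i ≠ Color.Empty ∧ c j ≠ Color.Empty)}

/-- Number of Cis positions on the cycle `C_n`. -/
noncomputable def cisCycle (n : ℕ) : ℕ :=
  Nat.card {c : ZMod n → Color //
    ∀ i : ZMod n, ¬(c i ≠ Color.Empty ∧ c (i + 1) ≠ Color.Empty)}

namespace CisAux

abbrev PathT (m : ℕ) := {c : Fin m → Color //
    ∀ i j : Fin m, (j : ℕ) = (i : ℕ) + 1 →
      ¬(c i ≠ Color.Empty ∧ c j ≠ Color.Empty)}

abbrev CycT (n : ℕ) := {c : ZMod n → Color //
    ∀ i : ZMod n, ¬(c i ≠ Color.Empty ∧ c (i + 1) ≠ Color.Empty)}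

lemma zval_add_one {n : ℕ} [NeZero n] (x : ZMod n) :
    (x + 1).val = (x.val + 1) % n := by
  have h : x + 1 = ((x.val + 1 : ℕ) : ZMod n) := by
    rw [Nat.cast_add, Nat.cast_one, ZMod.natCast_rightInverse x]
  rw [h, ZMod.val_natCast]

/-- Extension of a path coloring, putting `Empty` at position 0. -/
def extE (n : ℕ) (hn : 4 ≤ n) (f : Fin (n - 1) → Color) : ZMod n → Color :=
  fun x => if hx : x.val = 0 then Color.Empty
    else f ⟨x.val - 1, by
      have := @ZMod.val_lt n ⟨by omega⟩ x
      omega⟩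

lemma extE_zero {n : ℕ} (hn : 4 ≤ n) (f : Fin (n - 1) → Color) {x : ZMod n}
    (hx : x.val = 0) : extE n hn f x = Color.Empty := by
  simp only [extE]; rw [dif_pos hx]

lemma extE_pos {n : ℕ} (hn : 4 ≤ n) (f : Fin (n - 1) → Color) {x : ZMod n}
    (hx : ¬ x.val = 0) :
    extE n hn f x = f ⟨x.val - 1, by
      have := @ZMod.val_lt n ⟨by omega⟩ x; omega⟩ := by
  simp only [extE]; rw [dif_neg hx]

/-- Extension of a path coloring, putting color `k` at position 0 and `Empty`
at positions `1` and `n-1`. -/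
def extK (n : ℕ) (hn : 4 ≤ n) (k : Color) (f : Fin (n - 3) → Color) : ZMod n → Color :=
  fun x => if hx : x.val = 0 then k
    else if hx1 : x.val = 1 ∨ x.val = n - 1 then Color.Empty
    else f ⟨x.val - 2, by
      have := @ZMod.val_lt n ⟨by omega⟩ x
      omega⟩

lemma extK_zero {n : ℕ} (hn : 4 ≤ n) (k : Color) (f : Fin (n - 3) → Color) {x : ZMod n}
    (hx : x.val = 0) : extK n hn k f x = k := by
  simp only [extK]; rw [dif_pos hx]

lemma extK_one {n : ℕ} (hn : 4 ≤ n) (k : Color) (f : Fin (n - 3) → Color) {x : ZMod n}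
    (hx : x.val = 1 ∨ x.val = n - 1) : extK n hn k f x = Color.Empty := by
  have hx0 : ¬ x.val = 0 := by omega
  simp only [extK]; rw [dif_neg hx0, dif_pos hx]

lemma extK_mid {n : ℕ} (hn : 4 ≤ n) (k : Color) (f : Fin (n - 3) → Color) {x : ZMod n}
    (hx : ¬ x.val = 0) (hx1 : ¬(x.val = 1 ∨ x.val = n - 1)) :
    extK n hn k f x = f ⟨x.val - 2, by
      have := @ZMod.val_lt n ⟨by omega⟩ x; omega⟩ := by
  simp only [extK]; rw [dif_neg hx, dif_neg hx1]

/-- The fiber of cycle colorings with `c 0 = Empty` is equivalent to path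
colorings of length `n - 1`. -/
def emptyEquiv (n : ℕ) (hn : 4 ≤ n) :
    {c : CycT n // c.1 0 = Color.Empty} ≃ PathT (n - 1) :=
  letI : NeZero n := ⟨by omega⟩
  { toFun := fun c => ⟨fun i => c.1.1 (((i : ℕ) + 1 : ℕ) : ZMod n), by
      intro i j hij h
      apply c.1.2 (((i : ℕ) + 1 : ℕ) : ZMod n)
      refine ⟨h.1, ?_⟩
      have heq : (((i : ℕ) + 1 : ℕ) : ZMod n) + 1 = (((j : ℕ) + 1 : ℕ) : ZMod n) := by
        push_cast [hij]; ring
      rw [heq]; exact h.2⟩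
    invFun := fun f => ⟨⟨extE n hn f.1, by
      intro x h
      by_cases hx : x.val = 0
      · exact h.1 (extE_zero hn f.1 hx)
      by_cases hx1 : (x + 1).val = 0
      · exact h.2 (extE_zero hn f.1 hx1)
      have hlt := ZMod.val_lt x
      have hv : (x + 1).val = x.val + 1 := by
        rw [zval_add_one x]
        rcases Nat.lt_or_ge (x.val + 1) n with h' | h'
        · exact Nat.mod_eq_of_lt h'
        · exfalso
          have hh : x.val + 1 = n := by omega
          rw [zval_add_one x, hh, Nat.mod_self] at hx1
          exact hx1 rfl
      have hlt1 : (x + 1).val < n := ZMod.val_lt (x + 1)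
      apply f.2 ⟨x.val - 1, by omega⟩ ⟨x.val, by omega⟩
        (by show x.val = (x.val - 1) + 1; omega)
      constructor
      · rw [← extE_pos hn f.1 hx]; exact h.1
      · have h2 := extE_pos hn f.1 (x := x + 1) hx1
        have h3 : (⟨(x + 1).val - 1, by have := @ZMod.val_lt n ⟨by omega⟩ (x+1); omega⟩ :
            Fin (n - 1)) = ⟨x.val, by omega⟩ := Fin.ext (by show (x+1).val - 1 = x.val; omega)
        rw [h3] at h2
        rw [← h2]; exact h.2⟩, by
      show extE n hn f.1 0 = Color.Empty
      exact extE_zero hn f.1 (ZMod.val_zero)⟩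
    left_inv := by
      rintro ⟨⟨c, hc⟩, h0⟩
      have h0' : c 0 = Color.Empty := h0
      apply Subtype.ext; apply Subtype.ext
      funext x
      show extE n hn _ x = c x
      by_cases hx : x.val = 0
      · have hx0 : x = 0 := (ZMod.val_eq_zero x).mp hx
        rw [extE_zero hn _ hx, hx0, h0']
      · rw [extE_pos hn _ hx]
        show c (((x.val - 1 : ℕ) + 1 : ℕ) : ZMod n) = c x
        congr 1
        rw [show x.val - 1 + 1 = x.val by omega, ZMod.natCast_rightInverse x]
    right_inv := by
      rintro ⟨f, hf⟩
      apply Subtype.ext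
      funext i
      show extE n hn f (((i : ℕ) + 1 : ℕ) : ZMod n) = f i
      have hv : ((((i : ℕ) + 1 : ℕ) : ZMod n)).val = (i : ℕ) + 1 :=
        ZMod.val_cast_of_lt (by have := i.2; omega)
      have hne : ((((i : ℕ) + 1 : ℕ) : ZMod n)).val ≠ 0 := by omega
      rw [extE_pos hn f hne]
      congr 1
      exact Fin.ext (by show ((((i : ℕ) + 1 : ℕ) : ZMod n)).val - 1 = (i : ℕ); omega) }

/-- The fiber of cycle colorings with `c 0 = k ≠ Empty` is equivalent to path
colorings of length `n - 3`. -/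
def coloredEquiv (n : ℕ) (hn : 4 ≤ n) (k : Color) (hk : k ≠ Color.Empty) :
    {c : CycT n // c.1 0 = k} ≃ PathT (n - 3) :=
  letI : NeZero n := ⟨by omega⟩
  { toFun := fun c => ⟨fun i => c.1.1 (((i : ℕ) + 2 : ℕ) : ZMod n), by
      intro i j hij h
      apply c.1.2 (((i : ℕ) + 2 : ℕ) : ZMod n)
      refine ⟨h.1, ?_⟩
      have heq : (((i : ℕ) + 2 : ℕ) : ZMod n) + 1 = (((j : ℕ) + 2 : ℕ) : ZMod n) := by
        push_cast [hij]; ring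
      rw [heq]; exact h.2⟩
    invFun := fun f => ⟨⟨extK n hn k f.1, by
      intro x h
      have hlt := ZMod.val_lt x
      have hvadd := zval_add_one x
      by_cases hx1 : x.val = 1 ∨ x.val = n - 1
      · exact h.1 (extK_one hn k f.1 hx1)
      by_cases hx : x.val = 0
      · have hv1 : (x + 1).val = 1 := by
          rw [hvadd, hx]; exact Nat.mod_eq_of_lt (by omega)
        exact h.2 (extK_one hn k f.1 (Or.inl hv1))
      by_cases hx2 : x.val = n - 2
      · have hv1 : (x + 1).val = n - 1 := by
          rw [hvadd, hx2, show n - 2 + 1 = n - 1 by omega]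
          exact Nat.mod_eq_of_lt (by omega)
        exact h.2 (extK_one hn k f.1 (Or.inr hv1))
      -- main case : 2 ≤ x.val ≤ n - 3
      have hv : (x + 1).val = x.val + 1 := by
        rw [hvadd]; exact Nat.mod_eq_of_lt (by omega)
      apply f.2 ⟨x.val - 2, by omega⟩ ⟨x.val - 1, by omega⟩
        (by show x.val - 1 = (x.val - 2) + 1; omega)
      constructor
      · rw [← extK_mid hn k f.1 hx hx1]; exact h.1
      · have hx1' : ¬((x + 1).val = 0) := by omega
        have hx1'' : ¬((x + 1).val = 1 ∨ (x + 1).val = n - 1) := by omega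
        have h1 := extK_mid hn k f.1 hx1' hx1''
        have h2 : (⟨(x + 1).val - 2, by have := @ZMod.val_lt n ⟨by omega⟩ (x+1); omega⟩ :
            Fin (n - 3)) = ⟨x.val - 1, by omega⟩ :=
          Fin.ext (by show (x + 1).val - 2 = x.val - 1; omega)
        rw [h2] at h1
        rw [← h1]; exact h.2⟩, by
      show extK n hn k f.1 0 = k
      exact extK_zero hn k f.1 (ZMod.val_zero)⟩
    left_inv := by
      rintro ⟨⟨c, hc⟩, h0⟩
      have h0' : c 0 = k := h0
      apply Subtype.ext; apply Subtype.ext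
      funext x
      show extK n hn k _ x = c x
      have hlt := ZMod.val_lt x
      by_cases hx : x.val = 0
      · have hx0 : x = 0 := (ZMod.val_eq_zero x).mp hx
        rw [extK_zero hn k _ hx, hx0, h0']
      by_cases hx1 : x.val = 1 ∨ x.val = n - 1
      · -- need c x = Empty
        have hcx : c x = Color.Empty := by
          rcases hx1 with h1 | h1
          · -- x = 1 : use the cycle condition at 0, since c 0 = k ≠ Empty
            have hx1' : x = (1 : ZMod n) := by
              have h2 : ((1 : ℕ) : ZMod n) = x := by
                rw [← h1, ZMod.natCast_rightInverse x]
              rw [← h2, Nat.cast_one]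
            by_contra hne
            apply hc 0
            refine ⟨by rw [h0']; exact hk, ?_⟩
            rwa [zero_add, ← hx1']
          · -- x = n - 1 : use the cycle condition at x, since c (x+1) = c 0 = k ≠ Empty
            by_contra hne
            apply hc x
            refine ⟨hne, ?_⟩
            have hx0 : x + 1 = 0 := by
              have h2 : x = ((n - 1 : ℕ) : ZMod n) := by
                rw [← h1, ZMod.natCast_rightInverse x]
              rw [h2, show ((1 : ZMod n)) = ((1 : ℕ) : ZMod n) by rw [Nat.cast_one],
                ← Nat.cast_add, show n - 1 + 1 = n by omega, ZMod.natCast_self]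
            rw [hx0, h0']; exact hk
        rw [extK_one hn k _ hx1, hcx]
      · rw [extK_mid hn k _ hx hx1]
        show c (((x.val - 2 : ℕ) + 2 : ℕ) : ZMod n) = c x
        congr 1
        rw [show x.val - 2 + 2 = x.val by omega, ZMod.natCast_rightInverse x]
    right_inv := by
      rintro ⟨f, hf⟩
      apply Subtype.ext
      funext i
      show extK n hn k f (((i : ℕ) + 2 : ℕ) : ZMod n) = f i
      have hv : ((((i : ℕ) + 2 : ℕ) : ZMod n)).val = (i : ℕ) + 2 :=
        ZMod.val_cast_of_lt (by have := i.2; omega)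
      have hne : ¬ ((((i : ℕ) + 2 : ℕ) : ZMod n)).val = 0 := by omega
      have hne1 : ¬(((((i : ℕ) + 2 : ℕ) : ZMod n)).val = 1 ∨
          ((((i : ℕ) + 2 : ℕ) : ZMod n)).val = n - 1) := by
        have := i.2; omega
      rw [extK_mid hn k f hne hne1]
      congr 1
      exact Fin.ext (by show ((((i : ℕ) + 2 : ℕ) : ZMod n)).val - 2 = (i : ℕ); omega) }

end CisAux

open CisAux

theorem cisCycle_eq_cisPath (n : ℕ) (hn : 4 ≤ n) :
    cisCycle n = cisPath (n - 1) + 2 * cisPath (n - 3) := by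
  haveI : NeZero n := ⟨by omega⟩
  have e : CycT n ≃ Σ k : Color, {c : CycT n // c.1 0 = k} :=
    (Equiv.sigmaFiberEquiv fun c : CycT n => c.1 0).symm
  have hpath : ∀ m : ℕ, cisPath m = Nat.card (PathT m) := fun m =>
    (Nat.card_eq_fintype_card).symm
  have hcyc : cisCycle n = Nat.card (CycT n) := rfl
  rw [hcyc, Nat.card_congr e, Nat.card_eq_fintype_card, Fintype.card_sigma]
  have huniv : (Finset.univ : Finset Color) = {Color.Empty, Color.Blue, Color.Red} := by
    decide
  rw [huniv, Finset.sum_insert (by decide), Finset.sum_insert (by decide),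
    Finset.sum_singleton]
  rw [← Nat.card_eq_fintype_card, ← Nat.card_eq_fintype_card, ← Nat.card_eq_fintype_card]
  rw [Nat.card_congr (emptyEquiv n hn),
    Nat.card_congr (coloredEquiv n hn Color.Blue (by simp)),
    Nat.card_congr (coloredEquiv n hn Color.Red (by simp)),
    hpath, hpath]
  ring
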